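/- Let g be a pseudo-metric on W compatible with (ḡ, γ, θ), and set v := id_W − (γ − θ) ∘ π (the vertical projection of the 'no-slip' connection γ − θ). Then: (i) v maps W into Vert and g(a, b) = g(v a, v b) for all a, b ∈ W, so g is determined by its restriction to Vert together with the map γ − θ; and (ii) ḡ(ū, w̄) = g(θū, θw̄) for all ū, w̄ ∈ V, so θ is an isometry from (V, ḡ) into (Vert, g restricted to Vert). -/

import Mathlib

/-- (Data equivalence, pointwise form.) Let `g` be a pseudo-metric on `W`
compatible with `(ḡ, γ, θ)` and `v := id − (γ − θ) ∘ π` the vertical projection of the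
no-slip connection `γ − θ`. Then (i) `v` maps `W` into `Vert = ker π` and
`g a b = g (v a) (v b)` for all `a, b`, and (ii) `ḡ ū w̄ = g (θ ū) (θ w̄)` for all
`ū, w̄ ∈ V`, i.e. `θ` is an isometry from `(V, ḡ)` into `(Vert, g|Vert)`. -/
theorem stmt8 (V W : Type*)
    [AddCommGroup V] [Module ℝ V] [FiniteDimensional ℝ V]
    [AddCommGroup W] [Module ℝ W] [FiniteDimensional ℝ W]
    (π : W →ₗ[ℝ] V) (hπ : Function.Surjective π)
    (γ : V →ₗ[ℝ] W) (hγ : π ∘ₗ γ = LinearMap.id)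
    (θ : V →ₗ[ℝ] W) (hθinj : Function.Injective θ)
    (hθrange : LinearMap.range θ ≤ LinearMap.ker π)
    (gbar : V →ₗ[ℝ] V →ₗ[ℝ] ℝ)
    (hgbarsymm : ∀ u w : V, gbar u w = gbar w u)
    (hgbarposdef : ∀ v : V, v ≠ 0 → 0 < gbar v v)
    (g : W →ₗ[ℝ] W →ₗ[ℝ] ℝ)
    (hgsymm : ∀ u w : W, g u w = g w u)
    (hgpos : ∀ u : W, 0 ≤ g u u)
    (hcompat : ∀ u w u' w' : V,
      g (θ u + γ w) (θ u' + γ w') = gbar (u + w) (u' + w')) :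
    -- (i) the vertical projection of the no-slip connection lands in `Vert`
    (∀ a : W, π (a - (γ - θ) (π a)) = 0) ∧
    -- and `g` is determined by its restriction to `Vert` together with `γ - θ`
    (∀ a b : W, g a b = g (a - (γ - θ) (π a)) (b - (γ - θ) (π b))) ∧
    -- (ii) `θ` is an isometry from `(V, ḡ)` into `(Vert, g)`
    (∀ ub wb : V, gbar ub wb = g (θ ub) (θ wb)) := by
  have null : ∀ n : W, g n n = 0 → ∀ b : W, g n b = 0 := by
    intro n hn b
    by_contra hc
    have key : ∀ t : ℝ, 0 ≤ g b b + 2 * t * g n b := by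
      intro t
      have e : g (b + t • n) (b + t • n) = g b b + 2 * t * g n b := by
        simp [map_add, map_smul, hn, hgsymm n b]; ring
      have := hgpos (b + t • n)
      linarith [e ▸ this]
    set t := -(g b b + 1) / (2 * g n b) with ht
    have h2 : (2 : ℝ) * g n b ≠ 0 := by
      intro h
      rcases mul_eq_zero.mp h with h' | h'
      · norm_num at h'
      · exact hc h'
    have he : 2 * t * g n b = -(g b b + 1) := by
      rw [ht]; field_simp
    have := key t
    rw [he] at this
    linarith
  have hnull : ∀ x y : V, g ((γ - θ) x) ((γ - θ) y) = 0 := by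
    intro x y
    have h := hcompat (-x) x (-y) y
    simpa [map_neg, sub_eq_add_neg, add_comm] using h
  refine ⟨?_, ?_, ?_⟩
  · intro a
    have h1 : π (γ (π a)) = π a := congrFun (congrArg DFunLike.coe hγ) (π a)
    have h2 : π (θ (π a)) = 0 := hθrange ⟨π a, rfl⟩
    simp [map_sub, h1, h2]
  · intro a b
    set na := (γ - θ) (π a) with hna_def
    set nb := (γ - θ) (π b) with hnb_def
    have h1 : ∀ c : W, g na c = 0 := null _ (hnull _ _)
    have h2 : ∀ c : W, g c nb = 0 := fun c => by rw [hgsymm]; exact null _ (hnull _ _) c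
    simp [map_sub, h1, h2]
  · intro ub wb
    have h := hcompat ub 0 wb 0
    simpa using h.symm
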